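/- Define P(u)^3 using intersection numbers Ŝ^3 = -24, Ŝ^2·Ê = 6, Ŝ·Ê^2 = 12, Ê^3 = -30, Ŝ^2·G = 9, Ŝ·G^2 = -3, G^3 = 1, G^2·Ê = G·Ê^2 = Ŝ·Ê·G = 0, where P(u) = (1/3)Ê + (4/3)Ŝ + (4-u)G for u ∈ [0,2] and P(u) = (1/3)Ê + (7/3 - u/2)Ŝ + (4-u)G for u ∈ [2,4]. Then ∫_0^4 P(u)^3 du = 51, so S_X(G) = 51/22 and A_X(G)/S_X(G) = 3/(51/22) = 22/17. -/

import Mathlib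

open MeasureTheory intervalIntegral

/-- Cube of s·Ŝ + e·Ê + g·G expanded with the listed intersection numbers. -/
def cubeSEG (s e g : ℝ) : ℝ :=
  s^3*(-24) + 3*s^2*e*6 + 3*s*e^2*12 + e^3*(-30)
    + 3*s^2*g*9 + 3*s*g^2*(-3) + g^3*1
    + 3*e^2*g*0 + 3*e*g^2*0 + 6*s*e*g*0

theorem stmt_15 :
    (∫ u in (0:ℝ)..4,
        (if u ≤ 2 then cubeSEG (4/3) (1/3) (4-u) else cubeSEG (7/3 - u/2) (1/3) (4-u))) = 51 ∧
    (3 : ℝ) / ((1/22) * ∫ u in (0:ℝ)..4,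
        (if u ≤ 2 then cubeSEG (4/3) (1/3) (4-u) else cubeSEG (7/3 - u/2) (1/3) (4-u))) = 22/17 := by
  set f : ℝ → ℝ := fun u =>
    if u ≤ 2 then cubeSEG (4/3) (1/3) (4-u) else cubeSEG (7/3 - u/2) (1/3) (4-u) with hf
  have hcont : Continuous f := by
    apply Continuous.if_le
    · simp only [cubeSEG]; fun_prop
    · simp only [cubeSEG]; fun_prop
    · exact continuous_id
    · exact continuous_const
    · intro x hx
      subst hx
      norm_num [cubeSEG]
  have hI : ∫ u in (0:ℝ)..4, f u = 51 := by
    have hsplit : (∫ u in (0:ℝ)..2, f u) + (∫ u in (2:ℝ)..4, f u) = ∫ u in (0:ℝ)..4, f u :=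
      intervalIntegral.integral_add_adjacent_intervals
        (hcont.intervalIntegrable 0 2) (hcont.intervalIntegrable 2 4)
    have h1 : (∫ u in (0:ℝ)..2, f u) = ∫ u in (0:ℝ)..2, (22 - u^3) := by
      apply intervalIntegral.integral_congr
      intro u hu
      rw [Set.uIcc_of_le (by norm_num : (0:ℝ) ≤ 2)] at hu
      simp only [hf, if_pos hu.2, cubeSEG]
      ring
    have h2 : (∫ u in (2:ℝ)..4, f u)
        = ∫ u in (2:ℝ)..4, (52 - 27*u + (9/2)*u^2 - (1/4)*u^3) := by
      apply intervalIntegral.integral_congr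
      intro u hu
      rw [Set.uIcc_of_le (by norm_num : (2:ℝ) ≤ 4)] at hu
      by_cases h : u ≤ 2
      · have : u = 2 := le_antisymm h hu.1
        subst this
        simp only [hf, if_pos le_rfl, cubeSEG]; norm_num
      · simp only [hf, if_neg h, cubeSEG]; ring
    have e1 : (∫ u in (0:ℝ)..2, (22 - u^3)) = 40 := by
      have : (∫ u in (0:ℝ)..2, (22 - u^3))
          = (22*(2:ℝ) - 2^4/4) - (22*(0:ℝ) - 0^4/4) := by
        apply intervalIntegral.integral_eq_sub_of_hasDerivAt
          (f := fun u : ℝ => 22*u - u^4/4)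
        · intro x _
          have : HasDerivAt (fun u : ℝ => 22*u - u^4/4) (22 - x^3) x := by
            have h := ((hasDerivAt_id x).const_mul (22:ℝ)).sub
              (((hasDerivAt_pow 4 x)).div_const 4)
            refine h.congr_deriv ?_
            push_cast; ring
          exact this
        · exact (by fun_prop : Continuous fun u : ℝ => 22 - u^3).intervalIntegrable 0 2
      rw [this]; norm_num
    have e2 : (∫ u in (2:ℝ)..4, (52 - 27*u + (9/2)*u^2 - (1/4)*u^3)) = 11 := by
      have : (∫ u in (2:ℝ)..4, (52 - 27*u + (9/2)*u^2 - (1/4)*u^3))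
          = (52*(4:ℝ) - 27/2*4^2 + 3/2*4^3 - 4^4/16)
            - (52*(2:ℝ) - 27/2*2^2 + 3/2*2^3 - 2^4/16) := by
        apply intervalIntegral.integral_eq_sub_of_hasDerivAt
          (f := fun u : ℝ => 52*u - 27/2*u^2 + 3/2*u^3 - u^4/16)
        · intro x _
          have h : HasDerivAt (fun u : ℝ => 52*u - 27/2*u^2 + 3/2*u^3 - u^4/16)
              (52 - 27*x + (9/2)*x^2 - (1/4)*x^3) x := by
            have h := ((((hasDerivAt_id x).const_mul (52:ℝ)).sub
              ((hasDerivAt_pow 2 x).const_mul (27/2))).add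
              ((hasDerivAt_pow 3 x).const_mul (3/2))).sub
              ((hasDerivAt_pow 4 x).div_const 16)
            refine h.congr_deriv ?_
            push_cast; ring
          exact h
        · exact (by fun_prop :
            Continuous fun u : ℝ => 52 - 27*u + (9/2)*u^2 - (1/4)*u^3).intervalIntegrable 2 4
      rw [this]; norm_num
    rw [← hsplit, h1, h2, e1, e2]; norm_num
  refine ⟨hI, ?_⟩
  rw [hI]; norm_num
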